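/- arXiv:2308.04378 — 4 statements merged into one kernel-verified Lean document; each statement's English description precedes it below -/
import Mathlib

section
/- In dimension l = 1: let ξ ≤ ξ' be real numbers, x ∈ ℝ^d, γ ∈ ℝ^d, and let c : ℝ^d × ℝ → ℝ be continuous. For every continuous nondecreasing path h : [0,1] → ℝ with h(0) = ξ, h(1) = ξ', the Stieltjes integral ∫₀¹ c(x + γ(h(λ) − ξ), h(λ)) dh(λ) equals ∫₀^{ξ'−ξ} c(x + γζ, ξ + ζ) dζ. Consequently the infimum over all such interpolating paths of the jump cost is exactly ∫₀^{ξ'−ξ} c(x + γζ, ξ + ζ) dζ. -/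
open MeasureTheory

section Helpers
open Set Function

lemma squeeze_meas {μ : Measure ℝ} {S : Set ℝ} {u v : ℝ} {r : ENNReal}
    (h1 : Ioo u v ⊆ S) (h2 : S ⊆ Icc u v)
    (hIoo : μ (Ioo u v) = r) (hIcc : μ (Icc u v) = r) :
    μ S = r :=
  le_antisymm (hIcc ▸ measure_mono h2) (hIoo ▸ measure_mono h1)

lemma key (f : StieltjesFunction ℝ) (hf : Continuous f) :
    Measure.map f (f.measure.restrict (Icc 0 1)) = volume.restrict (Icc (f 0) (f 1)) := by
  have hll : ∀ x : ℝ, leftLim f x = f x := fun x =>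
    leftLim_eq_of_tendsto
      ((hf.tendsto x).mono_left nhdsWithin_le_nhds)
  refine Measure.ext_of_Ioc' _ _ (fun a b _ => ?_) (fun a b hab => ?_)
  · rw [Measure.map_apply hf.measurable measurableSet_Ioc,
      Measure.restrict_apply (hf.measurable measurableSet_Ioc)]
    exact ((measure_mono inter_subset_right).trans_lt
      (by rw [f.measure_Icc]; exact ENNReal.ofReal_lt_top)).ne
  rw [Measure.map_apply hf.measurable measurableSet_Ioc,
    Measure.restrict_apply (hf.measurable measurableSet_Ioc),
    Measure.restrict_apply measurableSet_Ioc]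
  set S : Set ℝ := f ⁻¹' Ioc a b ∩ Icc 0 1 with hSdef
  have hSsub : S ⊆ Icc 0 1 := inter_subset_right
  -- RHS set sandwiched
  have hR1 : Ioo (max a (f 0)) (min b (f 1)) ⊆ Ioc a b ∩ Icc (f 0) (f 1) := by
    rintro t ⟨h1, h2⟩
    exact ⟨⟨(le_max_left _ _).trans_lt h1, h2.le.trans (min_le_left _ _)⟩,
      (le_max_right _ _).trans h1.le, h2.le.trans (min_le_right _ _)⟩
  have hR2 : Ioc a b ∩ Icc (f 0) (f 1) ⊆ Icc (max a (f 0)) (min b (f 1)) := by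
    rintro t ⟨⟨h1, h2⟩, h3, h4⟩
    exact ⟨max_le h1.le h3, le_min h2 h4⟩
  have hRvol : volume (Ioc a b ∩ Icc (f 0) (f 1))
      = ENNReal.ofReal (min b (f 1) - max a (f 0)) :=
    squeeze_meas hR1 hR2 Real.volume_Ioo Real.volume_Icc
  rw [hRvol]
  by_cases hne : S.Nonempty
  · obtain ⟨s0, hs0⟩ := hne
    have hSne : S.Nonempty := ⟨s0, hs0⟩
    have hbdd : BddBelow S := ⟨0, fun t ht => (hSsub ht).1⟩
    have hbdd' : BddAbove S := ⟨1, fun t ht => (hSsub ht).2⟩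
    set u := sInf S with hu
    set v := sSup S with hv
    have huv : u ≤ v := csInf_le_csSup hSne hbdd hbdd'
    have huI : u ∈ Icc (0:ℝ) 1 :=
      isClosed_Icc.closure_subset_iff.2 hSsub (csInf_mem_closure hSne hbdd)
    have hvI : v ∈ Icc (0:ℝ) 1 :=
      isClosed_Icc.closure_subset_iff.2 hSsub (csSup_mem_closure hSne hbdd')
    -- f u = max a (f 0)
    have hfu_ge_a : a ≤ f u := by
      rw [f.mono.map_csInf_of_continuousAt hf.continuousAt hSne hbdd]
      exact le_csInf (Set.Nonempty.image _ hSne) (by rintro y ⟨t, ht, rfl⟩; exact ht.1.1.le)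
    have hfu_ge_0 : f 0 ≤ f u := f.mono huI.1
    have hfu_le : f u ≤ max a (f 0) := by
      rcases eq_or_lt_of_le huI.1 with h0u | h0u
      · rw [← h0u]; exact le_max_right _ _
      · refine le_trans ?_ (le_max_left _ _)
        refine le_of_tendsto ((hf.tendsto u).mono_left nhdsWithin_le_nhds)
          (Filter.eventually_of_mem (Ioo_mem_nhdsLT_of_mem ⟨h0u, le_refl u⟩) fun t ht => ?_)
        -- t ∈ Ioo 0 u, show f t ≤ a
        by_contra hta
        push_neg at hta
        have htS : t ∈ S := ⟨⟨hta, (f.mono (ht.2.le.trans (csInf_le hbdd hs0))).trans hs0.1.2⟩,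
          ht.1.le, ht.2.le.trans huI.2⟩
        exact absurd (csInf_le hbdd htS) (not_le.2 ht.2)
    have hfu : f u = max a (f 0) := le_antisymm hfu_le (max_le hfu_ge_a hfu_ge_0)
    -- f v = min b (f 1)
    have hfv_le_b : f v ≤ b := by
      rw [f.mono.map_csSup_of_continuousAt hf.continuousAt hSne hbdd']
      exact csSup_le (Set.Nonempty.image _ hSne) (by rintro y ⟨t, ht, rfl⟩; exact ht.1.2)
    have hfv_le_1 : f v ≤ f 1 := f.mono hvI.2
    have hfv_ge : min b (f 1) ≤ f v := by
      rcases eq_or_lt_of_le hvI.2 with h1v | h1v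
      · rw [h1v]; exact min_le_right _ _
      · refine le_trans (min_le_left _ _) ?_
        refine ge_of_tendsto ((hf.tendsto v).mono_left nhdsWithin_le_nhds)
          (Filter.eventually_of_mem (Ioo_mem_nhdsGT_of_mem ⟨le_refl v, h1v⟩) fun t ht => ?_)
        by_contra htb
        push_neg at htb
        have htS : t ∈ S := ⟨⟨hs0.1.1.trans_le (f.mono ((le_csSup hbdd' hs0).trans ht.1.le)),
          htb.le⟩, huI.1.trans (huv.trans ht.1.le), ht.2.le⟩
        exact absurd (le_csSup hbdd' htS) (not_le.2 ht.1)
    have hfv : f v = min b (f 1) := le_antisymm (le_min hfv_le_b hfv_le_1) hfv_ge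
    -- S sandwiched
    have hS1 : Ioo u v ⊆ S := by
      intro t ht
      obtain ⟨s1, hs1, hs1t⟩ := exists_lt_of_csInf_lt hSne ht.1
      obtain ⟨s2, hs2, hts2⟩ := exists_lt_of_lt_csSup hSne ht.2
      exact ⟨⟨hs1.1.1.trans_le (f.mono hs1t.le), (f.mono hts2.le).trans hs2.1.2⟩,
        (hSsub hs1).1.trans hs1t.le, hts2.le.trans (hSsub hs2).2⟩
    have hS2 : S ⊆ Icc u v := fun t ht => ⟨csInf_le hbdd ht, le_csSup hbdd' ht⟩
    have hmeasS : f.measure S = ENNReal.ofReal (f v - f u) :=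
      squeeze_meas hS1 hS2 (by rw [f.measure_Ioo, hll]) (by rw [f.measure_Icc, hll])
    rw [hmeasS, hfu, hfv]
  · rw [not_nonempty_iff_eq_empty] at hne
    rw [hne, measure_empty]
    symm
    rw [ENNReal.ofReal_eq_zero, sub_nonpos]
    by_contra hlt
    push_neg at hlt
    have hy : min b (f 1) ∈ Icc (f 0) (f 1) :=
      ⟨le_of_lt ((le_max_right a (f 0)).trans_lt hlt), min_le_right _ _⟩
    obtain ⟨t, htI, htf⟩ := intermediate_value_Icc (zero_le_one) hf.continuousOn hy
    have : t ∈ S := ⟨⟨htf ▸ (le_max_left a (f 0)).trans_lt hlt, htf ▸ min_le_left _ _⟩, htI⟩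
    rw [hne] at this
    exact this

end Helpers

open scoped Classical in
noncomputable def stieltjesOf (f : ℝ → ℝ) : Measure ℝ :=
  if h : Monotone f ∧ Continuous f then
    (⟨f, h.1, fun _ => h.2.continuousWithinAt⟩ : StieltjesFunction ℝ).measure
  else 0

/-- In dimension `l = 1`, every continuous nondecreasing interpolating path from `ξ` to
`ξ'` gives the same Stieltjes jump cost `∫₀^{ξ'−ξ} c(x + γζ, ξ + ζ) dζ`; consequently
the infimum over all such paths equals this linearly interpolated cost. -/
theorem stmt_4 {d : ℕ} (ξ ξ' : ℝ) (hle : ξ ≤ ξ') (x γ : Fin d → ℝ)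
    (c : (Fin d → ℝ) → ℝ → ℝ)
    (hc : Continuous fun p : (Fin d → ℝ) × ℝ => c p.1 p.2) :
    (∀ h : ℝ → ℝ, Monotone h → Continuous h → h 0 = ξ → h 1 = ξ' →
      ∫ lam in Set.Icc (0:ℝ) 1, c (x + (h lam - ξ) • γ) (h lam) ∂(stieltjesOf h)
        = ∫ ζ in (0:ℝ)..(ξ' - ξ), c (x + ζ • γ) (ξ + ζ)) ∧
    sInf {v : ℝ | ∃ h : ℝ → ℝ, Monotone h ∧ Continuous h ∧ h 0 = ξ ∧ h 1 = ξ' ∧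
        v = ∫ lam in Set.Icc (0:ℝ) 1, c (x + (h lam - ξ) • γ) (h lam) ∂(stieltjesOf h)}
      = ∫ ζ in (0:ℝ)..(ξ' - ξ), c (x + ζ • γ) (ξ + ζ) := by
  have main : ∀ h : ℝ → ℝ, Monotone h → Continuous h → h 0 = ξ → h 1 = ξ' →
      ∫ lam in Set.Icc (0:ℝ) 1, c (x + (h lam - ξ) • γ) (h lam) ∂(stieltjesOf h)
        = ∫ ζ in (0:ℝ)..(ξ' - ξ), c (x + ζ • γ) (ξ + ζ) := by
    intro h hm hcont h0 h1
    set F : StieltjesFunction ℝ := ⟨h, hm, fun _ => hcont.continuousWithinAt⟩ with hF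
    have hsf : stieltjesOf h = F.measure := dif_pos ⟨hm, hcont⟩
    set g : ℝ → ℝ := fun y => c (x + (y - ξ) • γ) y with hg
    have hgc : Continuous g := by
      have hφ : Continuous fun y : ℝ => ((x + (y - ξ) • γ, y) : (Fin d → ℝ) × ℝ) :=
        (continuous_const.add ((continuous_id.sub continuous_const).smul
          continuous_const)).prodMk continuous_id
      exact hc.comp hφ
    have step1 : ∫ lam in Set.Icc (0:ℝ) 1, c (x + (h lam - ξ) • γ) (h lam) ∂(stieltjesOf h)
        = ∫ y, g y ∂(Measure.map h (F.measure.restrict (Set.Icc 0 1))) := by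
      rw [hsf]
      exact (integral_map hcont.aemeasurable hgc.aestronglyMeasurable).symm
    have step2 : Measure.map h (F.measure.restrict (Set.Icc 0 1))
        = volume.restrict (Set.Icc ξ ξ') := by
      have := key F hcont
      rw [show (F : ℝ → ℝ) 0 = ξ from h0, show (F : ℝ → ℝ) 1 = ξ' from h1] at this
      exact this
    have step3 : ∫ ζ in (0:ℝ)..(ξ' - ξ), c (x + ζ • γ) (ξ + ζ)
        = ∫ y in ξ..ξ', g y := by
      have := intervalIntegral.integral_comp_add_left (a := (0:ℝ)) (b := ξ' - ξ) g ξ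
      rw [add_zero, add_sub_cancel] at this
      rw [← this]
      congr 1
      ext ζ
      simp [hg]
    rw [step1, step2, step3, intervalIntegral.integral_of_le hle,
      ← integral_Icc_eq_integral_Ioc]
  refine ⟨main, ?_⟩
  have hset : {v : ℝ | ∃ h : ℝ → ℝ, Monotone h ∧ Continuous h ∧ h 0 = ξ ∧ h 1 = ξ' ∧
        v = ∫ lam in Set.Icc (0:ℝ) 1, c (x + (h lam - ξ) • γ) (h lam) ∂(stieltjesOf h)}
      = {∫ ζ in (0:ℝ)..(ξ' - ξ), c (x + ζ • γ) (ξ + ζ)} := by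
    ext v
    simp only [Set.mem_setOf_eq, Set.mem_singleton_iff]
    constructor
    · rintro ⟨h, hm, hc', h0, h1, rfl⟩
      exact main h hm hc' h0 h1
    · rintro rfl
      refine ⟨fun t => ξ + t * (ξ' - ξ),
        monotone_const.add (monotone_id.mul_const (sub_nonneg.2 hle)),
        by continuity, by simp, by simp, ?_⟩
      exact (main _ (monotone_const.add (monotone_id.mul_const (sub_nonneg.2 hle)))
        (by continuity) (by simp) (by simp)).symm
  rw [hset, csInf_singleton]
end

section
/- Let δ > 0, M ≥ 0, and let σ, V : [0,1] → ℝ be nondecreasing functions with σ(0) = 0, σ(1) ≤ 1, V(0) = 0, V(1) ≤ M. Define β(u) := (u + δ(σ(u) + V(u))) / (1 + δ(1 + M)) and its right-continuous inverse β̄(u) := inf{v ∈ [0,1] : β(v) > u} ∧ 1. Then for all u ∈ [0,1]: |β̄(u) − u| ≤ 3δ(1 + M). -/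
/-- For `β(u) = (u + δ(σ(u)+V(u)))/(1 + δ(1+M))` built from nondecreasing `σ, V` with
`σ(0)=0`, `σ(1) ≤ 1`, `V(0)=0`, `V(1) ≤ M`, the right-continuous inverse `β̄` satisfies
`|β̄(u) − u| ≤ 3δ(1+M)` on `[0,1]`. -/
theorem stmt_10 (δ M : ℝ) (hδ : 0 < δ) (hM : 0 ≤ M) (σ V : ℝ → ℝ)
    (hσm : MonotoneOn σ (Set.Icc 0 1)) (hVm : MonotoneOn V (Set.Icc 0 1))
    (hσ0 : σ 0 = 0) (hσ1 : σ 1 ≤ 1) (hV0 : V 0 = 0) (hV1 : V 1 ≤ M) :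
    let β : ℝ → ℝ := fun u => (u + δ * (σ u + V u)) / (1 + δ * (1 + M))
    let βbar : ℝ → ℝ := fun u => sInf ({v | v ∈ Set.Icc (0:ℝ) 1 ∧ u < β v} ∪ {1})
    ∀ u ∈ Set.Icc (0:ℝ) 1, |βbar u - u| ≤ 3 * δ * (1 + M) := by
  intro β βbar u hu
  have hβ : ∀ v, β v = (v + δ * (σ v + V v)) / (1 + δ * (1 + M)) := fun v => rfl
  have hβbar : βbar u = sInf ({v | v ∈ Set.Icc (0:ℝ) 1 ∧ u < β v} ∪ {1}) := rfl
  set c : ℝ := δ * (1 + M) with hc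
  have hc0 : 0 ≤ c := by positivity
  have hD : (0:ℝ) < 1 + c := by linarith
  obtain ⟨hu0, hu1⟩ := hu
  have h01 : (0:ℝ) ∈ Set.Icc (0:ℝ) 1 := by constructor <;> norm_num
  have h11 : (1:ℝ) ∈ Set.Icc (0:ℝ) 1 := by constructor <;> norm_num
  have hσlb : ∀ v ∈ Set.Icc (0:ℝ) 1, 0 ≤ σ v := by
    intro v hv
    have := hσm h01 hv hv.1
    rwa [hσ0] at this
  have hVlb : ∀ v ∈ Set.Icc (0:ℝ) 1, 0 ≤ V v := by
    intro v hv
    have := hVm h01 hv hv.1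
    rwa [hV0] at this
  have hσub : ∀ v ∈ Set.Icc (0:ℝ) 1, σ v ≤ 1 := by
    intro v hv
    exact le_trans (hσm hv h11 hv.2) hσ1
  have hVub : ∀ v ∈ Set.Icc (0:ℝ) 1, V v ≤ M := by
    intro v hv
    exact le_trans (hVm hv h11 hv.2) hV1
  set T : Set ℝ := {v | v ∈ Set.Icc (0:ℝ) 1 ∧ u < β v} ∪ {1} with hT
  have h1T : (1:ℝ) ∈ T := Or.inr rfl
  have hne : T.Nonempty := ⟨1, h1T⟩
  have hbdd : BddBelow T := by
    refine ⟨0, fun x hx => ?_⟩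
    rcases hx with ⟨⟨hx0, _⟩, _⟩ | hx
    · exact hx0
    · simp only [Set.mem_singleton_iff] at hx; linarith [hx]
  set b : ℝ := sInf T with hb
  -- lower bound : u*(1+c) - c ≤ b
  have hlb : u * (1 + c) - c ≤ b := by
    refine le_csInf hne fun x hx => ?_
    rcases hx with ⟨hx1, hx2⟩ | hx
    · have hβx := hβ x
      rw [lt_div_iff₀ hD] at hx2
      have h1 : δ * (σ x + V x) ≤ c := by
        have := hσub x hx1
        have := hVub x hx1
        rw [hc]; nlinarith
      nlinarith
    · simp only [Set.mem_singleton_iff] at hx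
      subst hx
      nlinarith
  -- upper bound : b - u ≤ c
  have hub : b - u ≤ c := by
    by_cases hcase : u * (1 + c) < 1
    · have hble : b ≤ u * (1 + c) := by
        refine le_of_forall_pos_le_add fun ε hε => ?_
        set t : ℝ := min 1 (u * (1 + c) + ε) with ht
        have ht0 : 0 ≤ t := le_min (by norm_num) (by nlinarith)
        have ht1 : t ≤ 1 := min_le_left _ _
        have htmem : t ∈ Set.Icc (0:ℝ) 1 := ⟨ht0, ht1⟩
        have htgt : u * (1 + c) < t := lt_min hcase (by linarith)
        have hβt : u < β t := by
          rw [hβ, lt_div_iff₀ hD]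
          have := hσlb t htmem
          have := hVlb t htmem
          nlinarith
        have : b ≤ t := csInf_le hbdd (Or.inl ⟨htmem, hβt⟩)
        calc b ≤ t := this
          _ ≤ u * (1 + c) + ε := min_le_right _ _
      nlinarith
    · push_neg at hcase
      have hble : b ≤ 1 := csInf_le hbdd h1T
      nlinarith
  have habs : |b - u| ≤ c := by
    rw [abs_le]
    constructor <;> nlinarith
  rw [hβbar]
  calc |sInf ({v | v ∈ Set.Icc (0:ℝ) 1 ∧ u < β v} ∪ {1}) - u| = |b - u| := by rw [hb, hT]
    _ ≤ c := habs
    _ ≤ 3 * δ * (1 + M) := by rw [hc]; nlinarith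
end

section
/- Let c : ℝ^d × ℝ^l → ℝ^{1×l} be continuous, γ ∈ ℝ^{d×l}, x ∈ ℝ^d, and ξ ≤ ξ' in ℝ^l componentwise. Define the cost functional F on the compact set Γ(ξ,ξ') of continuous, componentwise nondecreasing, constant-ℓ¹-speed paths from ξ to ξ' by F(h) := ∫₀¹ c(x + γ(h(λ) − ξ), h(λ)) dh(λ). Then F is continuous on Γ(ξ,ξ') (with the uniform topology), and hence the infimum inf_{h ∈ Γ(ξ,ξ')} F(h) is attained. -/
open MeasureTheory Set

/-- Extension of a path on `[0,1]` to all of `ℝ` by clamping. -/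
noncomputable def extIcc {l : ℕ} (f : C(Set.Icc (0:ℝ) 1, Fin l → ℝ)) : ℝ → Fin l → ℝ :=
  fun lam => f (Set.projIcc 0 1 zero_le_one lam)


noncomputable def SF (f : ℝ → ℝ) (hm : Monotone f) (hc : Continuous f) : StieltjesFunction ℝ :=
  ⟨f, hm, fun _ => hc.continuousWithinAt⟩

lemma stieltjesOf_eq_SF (f : ℝ → ℝ) (hm : Monotone f) (hc : Continuous f) :
    stieltjesOf f = (SF f hm hc).measure := by
  rw [stieltjesOf, dif_pos ⟨hm, hc⟩]
  rfl

lemma noAtoms_of_continuous (f : StieltjesFunction ℝ) (hc : Continuous f) :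
    NullSingletonClass f.measure := by
  constructor
  intro a
  rw [StieltjesFunction.measure_singleton]
  have h1 : Function.leftLim f a = f a :=
    leftLim_eq_of_tendsto
      ((hc.tendsto a).mono_left nhdsWithin_le_nhds)
  rw [h1]
  show ENNReal.ofReal (f a - f a) = 0
  simp

lemma piece (f : StieltjesFunction ℝ) (H : ℝ → ℝ) (hH : Continuous H)
    (a b : ℝ) (hab : a ≤ b) (ω : ℝ)
    (hω : ∀ t ∈ Ioc a b, |H t - H a| ≤ ω) :
    |(∫ t in Ioc a b, H t ∂f.measure) - H a * (f b - f a)| ≤ ω * (f b - f a) := by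
  have hfin : f.measure (Ioc a b) < ⊤ := by
    rw [f.measure_Ioc]; exact ENNReal.ofReal_lt_top
  have htotal : (f.measure (Ioc a b)).toReal = f b - f a := by
    rw [f.measure_Ioc, ENNReal.toReal_ofReal (by linarith [f.mono hab])]
  have hint : IntegrableOn H (Ioc a b) f.measure := hH.integrableOn_Ioc
  have hconst : IntegrableOn (fun _ => H a) (Ioc a b) f.measure :=
    integrableOn_const hfin.ne
  have heq : (∫ t in Ioc a b, H t ∂f.measure) - H a * (f b - f a)
      = ∫ t in Ioc a b, (H t - H a) ∂f.measure := by
    rw [integral_sub hint hconst, setIntegral_const, measureReal_def, htotal, smul_eq_mul]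
    ring
  rw [heq]
  calc |∫ t in Ioc a b, (H t - H a) ∂f.measure|
      = ‖∫ t in Ioc a b, (H t - H a) ∂f.measure‖ := (Real.norm_eq_abs _).symm
    _ ≤ ω * (f.measure (Ioc a b)).toReal :=
        norm_setIntegral_le_of_norm_le_const hfin
          (fun t ht => by rw [Real.norm_eq_abs]; exact hω t ht)
    _ = ω * (f b - f a) := by rw [htotal]

lemma sum_Ioc (μ : Measure ℝ) (H : ℝ → ℝ) (u : ℕ → ℝ) (hu : Monotone u) (n : ℕ)
    (hint : ∀ a b : ℝ, IntegrableOn H (Ioc a b) μ) :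
    ∫ t in Ioc (u 0) (u n), H t ∂μ
      = ∑ k ∈ Finset.range n, ∫ t in Ioc (u k) (u (k + 1)), H t ∂μ := by
  induction n with
  | zero => simp
  | succ n ih =>
    rw [Finset.sum_range_succ, ← ih]
    have hset : Ioc (u 0) (u (n + 1)) = Ioc (u 0) (u n) ∪ Ioc (u n) (u (n + 1)) :=
      (Ioc_union_Ioc_eq_Ioc (hu (Nat.zero_le n)) (hu (Nat.le_succ n))).symm
    rw [hset, setIntegral_union (Set.Ioc_disjoint_Ioc_of_le le_rfl) measurableSet_Ioc
      (hint _ _) (hint _ _)]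

lemma key_s13 (f g : StieltjesFunction ℝ) (hfc : Continuous f) (hgc : Continuous g)
    (H : ℝ → ℝ) (hH : Continuous H) (M ω δ : ℝ) (hM : ∀ t, |H t| ≤ M)
    (N : ℕ) (hN : 0 < N)
    (hω : ∀ s t : ℝ, |s - t| ≤ (N : ℝ)⁻¹ → |H s - H t| ≤ ω)
    (hδ : ∀ t, |g t - f t| ≤ δ) :
    |(∫ t in Icc (0:ℝ) 1, H t ∂g.measure) - ∫ t in Icc (0:ℝ) 1, H t ∂f.measure| ≤
      2 * M * N * δ + ω * ((g 1 - g 0) + (f 1 - f 0)) := by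
  haveI := noAtoms_of_continuous f hfc
  haveI := noAtoms_of_continuous g hgc
  have hM0 : 0 ≤ M := (abs_nonneg _).trans (hM 0)
  have hδ0 : 0 ≤ δ := (abs_nonneg _).trans (hδ 0)
  have hω0 : 0 ≤ ω := (abs_nonneg _).trans (hω 0 0 (by simp))
  rw [integral_Icc_eq_integral_Ioc, integral_Icc_eq_integral_Ioc]
  have hNR : (0:ℝ) < N := Nat.cast_pos.2 hN
  set u : ℕ → ℝ := fun k => (k : ℝ) / N with hu_def
  have hu : Monotone u := fun a b hab => by
    have : (a:ℝ) ≤ b := Nat.cast_le.2 hab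
    simp only [hu_def]
    gcongr
  have hu0 : u 0 = 0 := by simp [hu_def]
  have huN : u N = 1 := by simp only [hu_def]; field_simp
  have hstep : ∀ k, u (k + 1) - u k = (N : ℝ)⁻¹ := by
    intro k; simp only [hu_def]; push_cast; field_simp; ring
  have hintf : ∀ a b : ℝ, IntegrableOn H (Ioc a b) f.measure := fun a b => hH.integrableOn_Ioc
  have hintg : ∀ a b : ℝ, IntegrableOn H (Ioc a b) g.measure := fun a b => hH.integrableOn_Ioc
  have hgsum : ∫ t in Ioc (0:ℝ) 1, H t ∂g.measure
      = ∑ k ∈ Finset.range N, ∫ t in Ioc (u k) (u (k + 1)), H t ∂g.measure := by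
    rw [← hu0, ← huN]; exact sum_Ioc _ _ u hu N hintg
  have hfsum : ∫ t in Ioc (0:ℝ) 1, H t ∂f.measure
      = ∑ k ∈ Finset.range N, ∫ t in Ioc (u k) (u (k + 1)), H t ∂f.measure := by
    rw [← hu0, ← huN]; exact sum_Ioc _ _ u hu N hintf
  set A : ℕ → ℝ := fun k => ∫ t in Ioc (u k) (u (k + 1)), H t ∂g.measure with hA
  set B : ℕ → ℝ := fun k => ∫ t in Ioc (u k) (u (k + 1)), H t ∂f.measure with hB
  have hoscil : ∀ k, ∀ t ∈ Ioc (u k) (u (k + 1)), |H t - H (u k)| ≤ ω := by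
    intro k t ht
    refine hω t (u k) ?_
    rw [abs_of_nonneg (by linarith [ht.1])]
    linarith [ht.2, hstep k]
  have hpg : ∀ k, |A k - H (u k) * (g (u (k + 1)) - g (u k))| ≤ ω * (g (u (k + 1)) - g (u k)) :=
    fun k => piece g H hH _ _ (hu (Nat.le_succ k)) ω (hoscil k)
  have hpf : ∀ k, |B k - H (u k) * (f (u (k + 1)) - f (u k))| ≤ ω * (f (u (k + 1)) - f (u k)) :=
    fun k => piece f H hH _ _ (hu (Nat.le_succ k)) ω (hoscil k)
  have hdd : ∀ k, |(g (u (k + 1)) - g (u k)) - (f (u (k + 1)) - f (u k))| ≤ 2 * δ := by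
    intro k
    have h1 := hδ (u (k + 1)); have h2 := hδ (u k)
    have he : (g (u (k + 1)) - g (u k)) - (f (u (k + 1)) - f (u k))
        = (g (u (k + 1)) - f (u (k + 1))) + (-(g (u k) - f (u k))) := by ring
    rw [he]
    refine (abs_add_le _ _).trans ?_
    rw [abs_neg]; linarith
  have hperk : ∀ k, |A k - B k| ≤
      ω * (g (u (k + 1)) - g (u k)) + (2 * M * δ + ω * (f (u (k + 1)) - f (u k))) := by
    intro k
    have h3 : |H (u k) * ((g (u (k + 1)) - g (u k)) - (f (u (k + 1)) - f (u k)))| ≤ M * (2 * δ) :=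
      (abs_mul _ _).le.trans (mul_le_mul (hM _) (hdd k) (abs_nonneg _) hM0)
    have e1 := abs_le.1 (hpg k); have e2 := abs_le.1 (hpf k); have e3 := abs_le.1 h3
    have he : A k - B k = (A k - H (u k) * (g (u (k + 1)) - g (u k)))
        - (B k - H (u k) * (f (u (k + 1)) - f (u k)))
        + H (u k) * ((g (u (k + 1)) - g (u k)) - (f (u (k + 1)) - f (u k))) := by ring
    rw [abs_le]
    constructor <;> · rw [he]; linarith [e1.1, e1.2, e2.1, e2.2, e3.1, e3.2]
  rw [hgsum, hfsum, ← Finset.sum_sub_distrib]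
  calc |∑ k ∈ Finset.range N, (A k - B k)|
      ≤ ∑ k ∈ Finset.range N, |A k - B k| := Finset.abs_sum_le_sum_abs _ _
    _ ≤ ∑ k ∈ Finset.range N,
        (ω * (g (u (k + 1)) - g (u k)) + (2 * M * δ + ω * (f (u (k + 1)) - f (u k)))) :=
        Finset.sum_le_sum fun k _ => hperk k
    _ = ω * (g (u N) - g (u 0)) + ((N : ℝ) * (2 * M * δ) + ω * (f (u N) - f (u 0))) := by
        have t1 : ∑ k ∈ Finset.range N, ω * (g (u (k + 1)) - g (u k))
            = ω * (g (u N) - g (u 0)) := by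
          rw [← Finset.mul_sum, Finset.sum_range_sub (fun k => g (u k))]
        have t2 : ∑ k ∈ Finset.range N, ω * (f (u (k + 1)) - f (u k))
            = ω * (f (u N) - f (u 0)) := by
          rw [← Finset.mul_sum, Finset.sum_range_sub (fun k => f (u k))]
        have t3 : ∑ _k ∈ Finset.range N, (2 * M * δ) = (N : ℝ) * (2 * M * δ) := by
          rw [Finset.sum_const, Finset.card_range, nsmul_eq_mul]
        rw [Finset.sum_add_distrib, Finset.sum_add_distrib, t1, t2, t3]
    _ = 2 * M * N * δ + ω * ((g 1 - g 0) + (f 1 - f 0)) := by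
        rw [hu0, huN]; ring

section Gamma
variable {l : ℕ} {ξ ξ' : Fin l → ℝ}

lemma gamma_incr (f : Set.Icc (0:ℝ) 1 → Fin l → ℝ)
    (h1 : ∀ i, Monotone fun t => f t i)
    (h2 : f ⟨0, by norm_num⟩ = ξ)
    (h4 : ∀ t : Set.Icc (0:ℝ) 1, ∑ i, |f t i - ξ i| = (t : ℝ) * ∑ i, |ξ' i - ξ i|) :
    (∀ t i, ξ i ≤ f t i) ∧
    ∀ a b : Set.Icc (0:ℝ) 1, a ≤ b → ∀ i,
      f b i - f a i ≤ ((b : ℝ) - (a : ℝ)) * ∑ i, |ξ' i - ξ i| := by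
  have hlow : ∀ (t : Set.Icc (0:ℝ) 1) i, ξ i ≤ f t i := by
    intro t i
    have h0t : (⟨0, by norm_num⟩ : Set.Icc (0:ℝ) 1) ≤ t := Subtype.coe_le_coe.1 t.2.1
    have := h1 i h0t
    simp only [h2] at this
    exact this
  refine ⟨hlow, ?_⟩
  intro a b hab i
  have habs : ∀ t : Set.Icc (0:ℝ) 1,
      ∑ j, (f t j - ξ j) = (t : ℝ) * ∑ i, |ξ' i - ξ i| := by
    intro t
    rw [← h4 t]
    exact Finset.sum_congr rfl fun j _ => (abs_of_nonneg (sub_nonneg.2 (hlow t j))).symm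
  have hsum : ∑ j, (f b j - f a j) = ((b : ℝ) - (a : ℝ)) * ∑ i, |ξ' i - ξ i| := by
    have ha := habs a; have hb := habs b
    have : ∑ j, (f b j - f a j) = (∑ j, (f b j - ξ j)) - ∑ j, (f a j - ξ j) := by
      rw [← Finset.sum_sub_distrib]; exact Finset.sum_congr rfl fun j _ => by ring
    rw [this, ha, hb]; ring
  have hterm : f b i - f a i ≤ ∑ j, (f b j - f a j) :=
    Finset.single_le_sum (fun j _ => sub_nonneg.2 (h1 j hab)) (Finset.mem_univ i)
  rw [hsum] at hterm
  exact hterm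

lemma gamma_dist (f : Set.Icc (0:ℝ) 1 → Fin l → ℝ)
    (h1 : ∀ i, Monotone fun t => f t i)
    (h2 : f ⟨0, by norm_num⟩ = ξ)
    (h4 : ∀ t : Set.Icc (0:ℝ) 1, ∑ i, |f t i - ξ i| = (t : ℝ) * ∑ i, |ξ' i - ξ i|) :
    ∀ a b : Set.Icc (0:ℝ) 1, dist (f a) (f b) ≤ (∑ i, |ξ' i - ξ i|) * dist a b := by
  obtain ⟨hlow, hincr⟩ := gamma_incr f h1 h2 h4
  have S0 : (0:ℝ) ≤ ∑ i, |ξ' i - ξ i| := Finset.sum_nonneg fun i _ => abs_nonneg _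
  suffices h : ∀ a b : Set.Icc (0:ℝ) 1, a ≤ b →
      dist (f a) (f b) ≤ (∑ i, |ξ' i - ξ i|) * dist a b by
    intro a b
    rcases le_total a b with h' | h'
    · exact h a b h'
    · rw [dist_comm, dist_comm a b]; exact h b a h'
  intro a b hab
  have hd0 : (0:ℝ) ≤ dist a b := dist_nonneg
  rw [dist_pi_le_iff (by positivity)]
  intro i
  rw [Real.dist_eq, abs_sub_comm, abs_of_nonneg (sub_nonneg.2 (h1 i hab))]
  have h5 := hincr a b hab i
  have hd : ((b : ℝ) - (a : ℝ)) ≤ dist a b := by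
    rw [Subtype.dist_eq, Real.dist_eq, abs_sub_comm]
    exact le_abs_self _
  nlinarith [mul_le_mul_of_nonneg_right hd S0]

lemma gamma_cont (f : Set.Icc (0:ℝ) 1 → Fin l → ℝ)
    (h1 : ∀ i, Monotone fun t => f t i)
    (h2 : f ⟨0, by norm_num⟩ = ξ)
    (h4 : ∀ t : Set.Icc (0:ℝ) 1, ∑ i, |f t i - ξ i| = (t : ℝ) * ∑ i, |ξ' i - ξ i|) :
    Continuous f := by
  have S0 : (0:ℝ) ≤ ∑ i, |ξ' i - ξ i| := Finset.sum_nonneg fun i _ => abs_nonneg _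
  have : LipschitzWith (Real.toNNReal (∑ i, |ξ' i - ξ i|)) f := by
    apply LipschitzWith.of_dist_le_mul
    intro a b
    rw [Real.coe_toNNReal _ S0]
    exact gamma_dist f h1 h2 h4 a b
  exact this.continuous

lemma gamma_compact (hle : ∀ i, ξ i ≤ ξ' i) :
    IsCompact {h : C(Set.Icc (0:ℝ) 1, Fin l → ℝ) |
      (∀ i, Monotone fun lam => h lam i) ∧
      h ⟨0, by norm_num⟩ = ξ ∧ h ⟨1, by norm_num⟩ = ξ' ∧
      ∀ lam : Set.Icc (0:ℝ) 1, ∑ i, |h lam i - ξ i| = (lam : ℝ) * ∑ i, |ξ' i - ξ i|} := by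
  set Γ : Set C(Set.Icc (0:ℝ) 1, Fin l → ℝ) :=
    {h | (∀ i, Monotone fun lam => h lam i) ∧
      h ⟨0, by norm_num⟩ = ξ ∧ h ⟨1, by norm_num⟩ = ξ' ∧
      ∀ lam : Set.Icc (0:ℝ) 1, ∑ i, |h lam i - ξ i| = (lam : ℝ) * ∑ i, |ξ' i - ξ i|} with hΓ
  set A : Set (Set.Icc (0:ℝ) 1 → Fin l → ℝ) :=
    {f | (∀ i, Monotone fun t => f t i) ∧
      f ⟨0, by norm_num⟩ = ξ ∧ f ⟨1, by norm_num⟩ = ξ' ∧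
      ∀ t : Set.Icc (0:ℝ) 1, ∑ i, |f t i - ξ i| = (t : ℝ) * ∑ i, |ξ' i - ξ i|} with hA
  apply ArzelaAscoli.isCompact_of_equicontinuous
  · have himg : ContinuousMap.toFun '' Γ = A := by
      ext f
      constructor
      · rintro ⟨g, hg, rfl⟩; exact hg
      · intro hf
        exact ⟨⟨f, gamma_cont f hf.1 hf.2.1 hf.2.2.2⟩, hf, rfl⟩
    rw [himg]
    have hclosed : IsClosed A := by
      have hrepr : A = (⋂ (i : Fin l), ⋂ (a : Set.Icc (0:ℝ) 1), ⋂ (b : Set.Icc (0:ℝ) 1),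
            ⋂ (_ : a ≤ b), {f : Set.Icc (0:ℝ) 1 → Fin l → ℝ | f a i ≤ f b i})
          ∩ ({f : Set.Icc (0:ℝ) 1 → Fin l → ℝ | f ⟨0, by norm_num⟩ = ξ}
          ∩ ({f : Set.Icc (0:ℝ) 1 → Fin l → ℝ | f ⟨1, by norm_num⟩ = ξ'}
          ∩ ⋂ (t : Set.Icc (0:ℝ) 1), {f : Set.Icc (0:ℝ) 1 → Fin l → ℝ |
              ∑ i, |f t i - ξ i| = (t : ℝ) * ∑ i, |ξ' i - ξ i|})) := by
        ext f
        simp only [hA, mem_inter_iff, mem_iInter, mem_setOf_eq]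
        constructor
        · rintro ⟨hA1, hA2, hA3, hA4⟩
          exact ⟨fun i a b hab => hA1 i hab, hA2, hA3, hA4⟩
        · rintro ⟨hA1, hA2, hA3, hA4⟩
          exact ⟨fun i a b hab => hA1 i a b hab, hA2, hA3, hA4⟩
      rw [hrepr]
      refine IsClosed.inter ?_ (IsClosed.inter ?_ (IsClosed.inter ?_ ?_))
      · exact isClosed_iInter fun i => isClosed_iInter fun a => isClosed_iInter fun b =>
          isClosed_iInter fun _ => isClosed_le
            ((continuous_apply i).comp (continuous_apply a))
            ((continuous_apply i).comp (continuous_apply b))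
      · exact isClosed_eq (continuous_apply _) continuous_const
      · exact isClosed_eq (continuous_apply _) continuous_const
      · exact isClosed_iInter fun t => isClosed_eq
          (continuous_finset_sum _ fun i _ =>
            (((continuous_apply i).comp (continuous_apply t)).sub continuous_const).abs)
          continuous_const
    have hsub : A ⊆ (univ : Set (Set.Icc (0:ℝ) 1)).pi fun _ => Icc ξ ξ' := by
      intro f hf
      rw [mem_univ_pi]
      intro t
      rw [mem_Icc]
      obtain ⟨hlow, _⟩ := gamma_incr f hf.1 hf.2.1 hf.2.2.2
      constructor
      · intro i; exact hlow t i
      · intro i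
        have ht1 : t ≤ (⟨1, by norm_num⟩ : Set.Icc (0:ℝ) 1) := Subtype.coe_le_coe.1 t.2.2
        have := hf.1 i ht1
        simp only [hf.2.2.1] at this
        exact this
    exact IsCompact.of_isClosed_subset (isCompact_univ_pi fun _ => isCompact_Icc) hclosed hsub
  · refine Metric.equicontinuous_of_continuity_modulus (fun t => (∑ i, |ξ' i - ξ i|) * t) ?_ _ ?_
    · have : Filter.Tendsto (fun t : ℝ => (∑ i, |ξ' i - ξ i|) * t) (nhds 0)
          (nhds ((∑ i, |ξ' i - ξ i|) * 0)) := (continuous_const.mul continuous_id).tendsto 0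
      simpa using this
    · intro a b g
      exact gamma_dist (g : C(Set.Icc (0:ℝ) 1, Fin l → ℝ))
        g.2.1 g.2.2.1 g.2.2.2.2 a b

end Gamma

set_option maxHeartbeats 4000000 in
/-- On the compact set `Γ(ξ,ξ')` of continuous, componentwise nondecreasing,
constant-ℓ¹-speed paths from `ξ` to `ξ'`, the jump-cost functional
`F(h) = ∫₀¹ c(x + γ(h(λ)−ξ), h(λ)) dh(λ)` is continuous (uniform topology), and hence
its infimum over `Γ(ξ,ξ')` is attained. -/
theorem stmt_13 {l d : ℕ} (c : (Fin d → ℝ) → (Fin l → ℝ) → Fin l → ℝ)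
    (hc : Continuous fun p : (Fin d → ℝ) × (Fin l → ℝ) => c p.1 p.2)
    (γ : Matrix (Fin d) (Fin l) ℝ) (x : Fin d → ℝ)
    (ξ ξ' : Fin l → ℝ) (hle : ∀ i, ξ i ≤ ξ' i) :
    let Γ : Set C(Set.Icc (0:ℝ) 1, Fin l → ℝ) :=
      {h | (∀ i, Monotone fun lam => h lam i) ∧
        h ⟨0, by norm_num⟩ = ξ ∧ h ⟨1, by norm_num⟩ = ξ' ∧
        ∀ lam : Set.Icc (0:ℝ) 1, ∑ i, |h lam i - ξ i| = (lam : ℝ) * ∑ i, |ξ' i - ξ i|}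
    let F : C(Set.Icc (0:ℝ) 1, Fin l → ℝ) → ℝ := fun h =>
      ∑ j, ∫ lam in Set.Icc (0:ℝ) 1,
        c (x + γ.mulVec (extIcc h lam - ξ)) (extIcc h lam) j
          ∂(stieltjesOf fun lam => extIcc h lam j)
    ContinuousOn F Γ ∧ ∃ h ∈ Γ, ∀ g ∈ Γ, F h ≤ F g := by
  intro Γ F
  classical
  set S : ℝ := ∑ i, |ξ' i - ξ i| with hSdef
  have hS0 : (0:ℝ) ≤ S := Finset.sum_nonneg fun i _ => abs_nonneg _
  have hSabs : ∀ i, |ξ' i - ξ i| = ξ' i - ξ i := fun i => abs_of_nonneg (sub_nonneg.2 (hle i))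
  have hScomp : S = ∑ i, (ξ' i - ξ i) := Finset.sum_congr rfl fun i _ => hSabs i
  set φ : (Fin l → ℝ) → (Fin l → ℝ) := fun y => c (x + γ.mulVec (y - ξ)) y with hφdef
  have hφ : Continuous φ := by
    have hmv : Continuous fun y : Fin l → ℝ => γ.mulVec y := by
      apply continuous_pi
      intro i
      simp only [Matrix.mulVec, dotProduct]
      exact continuous_finset_sum _ fun j _ => continuous_const.mul (continuous_apply j)
    exact hc.comp ((Continuous.add continuous_const
      (hmv.comp (continuous_id.sub continuous_const))).prodMk continuous_id)
  have hFeq : ∀ g : C(Set.Icc (0:ℝ) 1, Fin l → ℝ), F g = ∑ j, ∫ t in Icc (0:ℝ) 1,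
      φ (extIcc g t) j ∂(stieltjesOf fun t => extIcc g t j) := fun g => rfl
  -- membership facts
  have hmemΓ : ∀ h' : C(Set.Icc (0:ℝ) 1, Fin l → ℝ), h' ∈ Γ →
      (∀ i, Monotone fun lam => h' lam i) ∧
      h' ⟨0, by norm_num⟩ = ξ ∧ h' ⟨1, by norm_num⟩ = ξ' ∧
      ∀ lam : Set.Icc (0:ℝ) 1, ∑ i, |h' lam i - ξ i| = (lam : ℝ) * S := fun h' hh' => hh'
  have hmem : ∀ h', h' ∈ Γ → ∀ (t : Set.Icc (0:ℝ) 1) i, ξ i ≤ h' t i ∧ h' t i ≤ ξ' i := by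
    intro h' hh' t i
    obtain ⟨hm1, hm2, hm3, hm4⟩ := hmemΓ h' hh'
    obtain ⟨hlow, _⟩ := gamma_incr (ξ := ξ) (ξ' := ξ') h' hm1 hm2 hm4
    refine ⟨hlow t i, ?_⟩
    have ht1 : t ≤ (⟨1, by norm_num⟩ : Set.Icc (0:ℝ) 1) := Subtype.coe_le_coe.1 t.2.2
    have := hm1 i ht1
    simp only [hm3] at this
    exact this
  have hextmem : ∀ h', h' ∈ Γ → ∀ t : ℝ, extIcc h' t ∈ Icc ξ ξ' := by
    intro h' hh' t
    rw [mem_Icc]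
    exact ⟨fun i => (hmem h' hh' _ i).1, fun i => (hmem h' hh' _ i).2⟩
  have hmono : ∀ h', h' ∈ Γ → ∀ j, Monotone fun t => extIcc h' t j := by
    intro h' hh' j
    exact ((hmemΓ h' hh').1 j).comp (monotone_projIcc zero_le_one)
  have hcont : ∀ (h' : C(Set.Icc (0:ℝ) 1, Fin l → ℝ)) (j : Fin l),
      Continuous fun t => extIcc h' t j := fun h' j =>
    (continuous_apply j).comp (h'.continuous.comp continuous_projIcc)
  have hf0 : ∀ h', h' ∈ Γ → ∀ j, extIcc h' 0 j = ξ j ∧ extIcc h' 1 j = ξ' j := by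
    intro h' hh' j
    constructor
    · show h' (projIcc 0 1 zero_le_one 0) j = ξ j
      rw [projIcc_left]
      exact congrFun (hmemΓ h' hh').2.1 j
    · show h' (projIcc 0 1 zero_le_one 1) j = ξ' j
      rw [projIcc_right]
      exact congrFun (hmemΓ h' hh').2.2.1 j
  have hΓcomp : IsCompact Γ := gamma_compact hle
  have hΓne : Γ.Nonempty := by
    refine ⟨⟨fun t => ξ + (t : ℝ) • (ξ' - ξ),
      continuous_const.add (continuous_subtype_val.smul continuous_const)⟩, ?_, ?_, ?_, ?_⟩
    · intro i a b hab
      have hab' : (a:ℝ) ≤ b := hab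
      simp only [ContinuousMap.coe_mk, Pi.add_apply, Pi.smul_apply, Pi.sub_apply, smul_eq_mul]
      have := mul_le_mul_of_nonneg_right hab' (sub_nonneg.2 (hle i))
      linarith
    · show ξ + (0:ℝ) • (ξ' - ξ) = ξ
      simp
    · show ξ + (1:ℝ) • (ξ' - ξ) = ξ'
      funext i
      simp
    · intro lam
      have h0 : (0:ℝ) ≤ lam := lam.2.1
      simp only [ContinuousMap.coe_mk, Pi.add_apply, Pi.smul_apply, Pi.sub_apply, smul_eq_mul]
      have habs2 : ∀ i, |ξ i + (lam:ℝ) * (ξ' i - ξ i) - ξ i| = (lam:ℝ) * |ξ' i - ξ i| := by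
        intro i
        rw [show ξ i + (lam:ℝ) * (ξ' i - ξ i) - ξ i = (lam:ℝ) * (ξ' i - ξ i) by ring,
          abs_mul, abs_of_nonneg h0]
      simp_rw [habs2]
      rw [← Finset.mul_sum]
  -- continuity
  have hconts : ContinuousOn F Γ := by
    rw [Metric.continuousOn_iff]
    intro h hh ε hε
    obtain ⟨C, hC⟩ := (isCompact_Icc (a := ξ) (b := ξ')).exists_bound_of_continuousOn
      hφ.continuousOn
    set M : ℝ := max C 1 with hMdef
    have hMpos : (0:ℝ) < M := lt_of_lt_of_le one_pos (le_max_right _ _)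
    have hMb : ∀ y ∈ Icc ξ ξ', ∀ j, |φ y j| ≤ M := by
      intro y hy j
      calc |φ y j| = ‖φ y j‖ := rfl
        _ ≤ ‖φ y‖ := norm_le_pi_norm _ j
        _ ≤ C := hC y hy
        _ ≤ M := le_max_left _ _
    set ε1 : ℝ := ε / (4 * (S + 1)) with hε1def
    have hε1pos : 0 < ε1 := by positivity
    set ε2 : ℝ := ε / (8 * (S + 1)) with hε2def
    have hε2pos : 0 < ε2 := by positivity
    have hφu := (isCompact_Icc (a := ξ) (b := ξ')).uniformContinuousOn_of_continuous
      hφ.continuousOn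
    rw [Metric.uniformContinuousOn_iff] at hφu
    obtain ⟨δ₁, hδ₁pos, hδ₁⟩ := hφu ε1 hε1pos
    set H : ℝ → Fin l → ℝ := fun t => φ (extIcc h t) with hHdef
    have hHcont : Continuous H := hφ.comp (h.continuous.comp continuous_projIcc)
    have hHu : UniformContinuous H := by
      have h1 : UniformContinuous fun s : Set.Icc (0:ℝ) 1 => φ (h s) :=
        CompactSpace.uniformContinuous_of_continuous (hφ.comp h.continuous)
      have h2 : UniformContinuous (projIcc (0:ℝ) 1 zero_le_one) :=
        (LipschitzWith.projIcc zero_le_one).uniformContinuous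
      exact h1.comp h2
    rw [Metric.uniformContinuous_iff] at hHu
    obtain ⟨δ₀, hδ₀pos, hδ₀⟩ := hHu ε2 hε2pos
    obtain ⟨n, hn⟩ := exists_nat_gt (1 / δ₀)
    set N : ℕ := n + 1 with hNdef
    have hNpos : 0 < N := Nat.succ_pos n
    have hNRpos : (0:ℝ) < N := by positivity
    have hNinv : ((N:ℝ))⁻¹ < δ₀ := by
      have h2 : 1 / δ₀ < (N:ℝ) := lt_of_lt_of_le hn (by exact_mod_cast Nat.le_succ n)
      rw [div_lt_iff₀ hδ₀pos] at h2
      rw [inv_eq_one_div, div_lt_iff₀ hNRpos]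
      nlinarith
    have hωH : ∀ (j : Fin l) (s t : ℝ), |s - t| ≤ (N:ℝ)⁻¹ → |H s j - H t j| ≤ ε2 := by
      intro j s t hst
      have hd : dist s t < δ₀ := lt_of_le_of_lt (le_of_eq (Real.dist_eq s t) |>.trans hst) hNinv
      calc |H s j - H t j| = dist (H s j) (H t j) := (Real.dist_eq _ _).symm
        _ ≤ dist (H s) (H t) := dist_le_pi_dist _ _ j
        _ ≤ ε2 := (hδ₀ hd).le
    set K : ℝ := (l : ℝ) * (2 * M * N) with hKdef
    have hK0 : 0 ≤ K := by
      rw [hKdef]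
      exact mul_nonneg (Nat.cast_nonneg l)
        (mul_nonneg (mul_nonneg (by norm_num) hMpos.le) hNRpos.le)
    set δ2 : ℝ := ε / (4 * (K + 1)) with hδ2def
    have hδ2pos : 0 < δ2 := by
      rw [hδ2def]
      exact div_pos hε (by linarith)
    refine ⟨min δ₁ δ2, lt_min hδ₁pos hδ2pos, ?_⟩
    intro g hg hdist
    set dgh : ℝ := dist g h with hdghdef
    have hd0 : 0 ≤ dgh := dist_nonneg
    have hdδ₁ : dgh < δ₁ := lt_of_lt_of_le hdist (min_le_left _ _)
    have hdδ2 : dgh < δ2 := lt_of_lt_of_le hdist (min_le_right _ _)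
    -- pointwise closeness
    have hclose : ∀ (t : ℝ) (j : Fin l), |extIcc g t j - extIcc h t j| ≤ dgh := by
      intro t j
      calc |extIcc g t j - extIcc h t j|
          = dist (extIcc g t j) (extIcc h t j) := (Real.dist_eq _ _).symm
        _ ≤ dist (extIcc g t) (extIcc h t) := dist_le_pi_dist _ _ j
        _ ≤ dgh := ContinuousMap.dist_apply_le_dist _
    have hclosev : ∀ t : ℝ, dist (extIcc g t) (extIcc h t) ≤ dgh := fun t =>
      ContinuousMap.dist_apply_le_dist _
    -- per-component measures
    have hperj : ∀ j : Fin l,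
        |(∫ t in Icc (0:ℝ) 1, φ (extIcc g t) j ∂(stieltjesOf fun t => extIcc g t j)) -
          ∫ t in Icc (0:ℝ) 1, φ (extIcc h t) j ∂(stieltjesOf fun t => extIcc h t j)| ≤
        ε1 * (ξ' j - ξ j) + (2 * M * N * dgh + ε2 * ((ξ' j - ξ j) + (ξ' j - ξ j))) := by
      intro j
      set fj : ℝ → ℝ := fun t => extIcc h t j with hfjdef
      set gj : ℝ → ℝ := fun t => extIcc g t j with hgjdef
      have hμh : stieltjesOf fj = (SF fj (hmono h hh j) (hcont h j)).measure :=
        stieltjesOf_eq_SF _ _ _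
      have hμg : stieltjesOf gj = (SF gj (hmono g hg j) (hcont g j)).measure :=
        stieltjesOf_eq_SF _ _ _
      set νm : Measure ℝ := (SF gj (hmono g hg j) (hcont g j)).measure with hνdef
      set μm : Measure ℝ := (SF fj (hmono h hh j) (hcont h j)).measure with hμdef
      rw [hμh, hμg]
      set I1 : ℝ := ∫ t in Icc (0:ℝ) 1, φ (extIcc g t) j ∂νm with hI1
      set I2 : ℝ := ∫ t in Icc (0:ℝ) 1, H t j ∂νm with hI2
      set I3 : ℝ := ∫ t in Icc (0:ℝ) 1, H t j ∂μm with hI3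
      have hstep1 : |I1 - I2| ≤ ε1 * (ξ' j - ξ j) := by
        have hfin : νm (Icc (0:ℝ) 1) < ⊤ := by
          have h1 : νm (Icc (0:ℝ) 1) ≤ νm (Ioc (-1:ℝ) 1) :=
            measure_mono (fun t ht => ⟨lt_of_lt_of_le (by norm_num : (-1:ℝ) < 0) ht.1, ht.2⟩)
          have h2 : νm (Ioc (-1:ℝ) 1) = ENNReal.ofReal (gj 1 - gj (-1)) := by
            rw [hνdef]; exact StieltjesFunction.measure_Ioc _ _ _
          exact lt_of_le_of_lt h1 (by rw [h2]; exact ENNReal.ofReal_lt_top)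
        have hIg : IntegrableOn (fun t => φ (extIcc g t) j) (Icc (0:ℝ) 1) νm :=
          ((continuous_apply j).comp (hφ.comp (g.continuous.comp continuous_projIcc))).integrableOn_Icc
        have hIH : IntegrableOn (fun t => H t j) (Icc (0:ℝ) 1) νm :=
          ((continuous_apply j).comp hHcont).integrableOn_Icc
        have hsub : I1 - I2 = ∫ t in Icc (0:ℝ) 1, (φ (extIcc g t) j - H t j) ∂νm := by
          rw [hI1, hI2, ← integral_sub hIg hIH]
        have hptb : ∀ t ∈ Icc (0:ℝ) 1, ‖φ (extIcc g t) j - H t j‖ ≤ ε1 := by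
          intro t _
          have hdy : dist (extIcc g t) (extIcc h t) < δ₁ := lt_of_le_of_lt (hclosev t) hdδ₁
          have := hδ₁ (extIcc g t) (hextmem g hg t) (extIcc h t) (hextmem h hh t) hdy
          rw [Real.norm_eq_abs]
          calc |φ (extIcc g t) j - φ (extIcc h t) j|
              = dist (φ (extIcc g t) j) (φ (extIcc h t) j) := (Real.dist_eq _ _).symm
            _ ≤ dist (φ (extIcc g t)) (φ (extIcc h t)) := dist_le_pi_dist _ _ j
            _ ≤ ε1 := this.le
        have hmeas : (νm (Icc (0:ℝ) 1)).toReal ≤ ξ' j - ξ j := by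
          have h1 : νm (Icc (0:ℝ) 1) ≤ νm (Ioc (-1 : ℝ) 1) :=
            measure_mono (fun t ht => ⟨lt_of_lt_of_le (by norm_num : (-1:ℝ) < 0) ht.1, ht.2⟩)
          have h2 : νm (Ioc (-1 : ℝ) 1) = ENNReal.ofReal (gj 1 - gj (-1)) := by
            rw [hνdef]; exact StieltjesFunction.measure_Ioc _ _ _
          have h3 : gj (-1) = ξ j := by
            show g (projIcc 0 1 zero_le_one (-1)) j = ξ j
            rw [projIcc_of_le_left _ (by norm_num)]
            exact congrFun (hmemΓ g hg).2.1 j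
          have h4 : gj 1 = ξ' j := (hf0 g hg j).2
          calc (νm (Icc (0:ℝ) 1)).toReal ≤ (νm (Ioc (-1 : ℝ) 1)).toReal := by
                apply ENNReal.toReal_mono _ h1
                rw [h2]; exact ENNReal.ofReal_ne_top
            _ = ξ' j - ξ j := by
                rw [h2, h3, h4, ENNReal.toReal_ofReal (by linarith [hle j])]
        calc |I1 - I2| = ‖∫ t in Icc (0:ℝ) 1, (φ (extIcc g t) j - H t j) ∂νm‖ := by
              rw [hsub, Real.norm_eq_abs]
          _ ≤ ε1 * (νm (Icc (0:ℝ) 1)).toReal :=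
              norm_setIntegral_le_of_norm_le_const hfin hptb
          _ ≤ ε1 * (ξ' j - ξ j) := by
              exact mul_le_mul_of_nonneg_left hmeas hε1pos.le
      have hstep2 : |I2 - I3| ≤ 2 * M * N * dgh + ε2 * ((ξ' j - ξ j) + (ξ' j - ξ j)) := by
        have hb : |I2 - I3| ≤ 2 * M * N * dgh +
            ε2 * ((gj 1 - gj 0) + (fj 1 - fj 0)) :=
          key_s13 (SF fj (hmono h hh j) (hcont h j)) (SF gj (hmono g hg j) (hcont g j))
            (hcont h j) (hcont g j) (fun t => H t j) ((continuous_apply j).comp hHcont)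
            M ε2 dgh
            (fun t => hMb (extIcc h t) (hextmem h hh t) j)
            N hNpos (hωH j)
            (fun t => hclose t j)
        have h4 : gj 1 = ξ' j := (hf0 g hg j).2
        have h5 : gj 0 = ξ j := (hf0 g hg j).1
        have h6 : fj 1 = ξ' j := (hf0 h hh j).2
        have h7 : fj 0 = ξ j := (hf0 h hh j).1
        rw [h4, h5, h6, h7] at hb
        exact hb
      calc |I1 - I3| ≤ |I1 - I2| + |I2 - I3| := abs_sub_le _ _ _
        _ ≤ ε1 * (ξ' j - ξ j) + (2 * M * N * dgh + ε2 * ((ξ' j - ξ j) + (ξ' j - ξ j))) :=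
            add_le_add hstep1 hstep2
    -- sum up
    rw [Real.dist_eq, hFeq g, hFeq h, ← Finset.sum_sub_distrib]
    have hsumb : ∑ j : Fin l, (ε1 * (ξ' j - ξ j) +
        (2 * M * N * dgh + ε2 * ((ξ' j - ξ j) + (ξ' j - ξ j)))) =
        ε1 * S + ((l : ℝ) * (2 * M * N * dgh) + 2 * ε2 * S) := by
      have hj : ∀ j : Fin l, ε1 * (ξ' j - ξ j) +
          (2 * M * N * dgh + ε2 * ((ξ' j - ξ j) + (ξ' j - ξ j))) =
          (ε1 + 2 * ε2) * (ξ' j - ξ j) + 2 * M * (N:ℝ) * dgh := fun j => by ring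
      simp_rw [hj]
      rw [Finset.sum_add_distrib, ← Finset.mul_sum, ← hScomp, Finset.sum_const,
        Finset.card_univ, Fintype.card_fin, nsmul_eq_mul]
      ring
    have hfinal : ε1 * S + ((l : ℝ) * (2 * M * N * dgh) + 2 * ε2 * S) < ε := by
      have e1 : ε1 * S ≤ ε / 4 := by
        have hne : S + 1 ≠ 0 := ne_of_gt (by linarith)
        have : ε1 * (S + 1) = ε / 4 := by
          rw [hε1def, div_mul_eq_mul_div, mul_comm (4:ℝ) (S+1), ← div_div,
            mul_div_assoc, div_self hne, mul_one]
        nlinarith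
      have e2 : 2 * ε2 * S ≤ ε / 4 := by
        have hne : S + 1 ≠ 0 := ne_of_gt (by linarith)
        have : ε2 * (S + 1) = ε / 8 := by
          rw [hε2def, div_mul_eq_mul_div, mul_comm (8:ℝ) (S+1), ← div_div,
            mul_div_assoc, div_self hne, mul_one]
        nlinarith
      have e3 : (l : ℝ) * (2 * M * N * dgh) ≤ K * δ2 := by
        have : (l : ℝ) * (2 * M * N * dgh) = K * dgh := by rw [hKdef]; ring
        rw [this]
        exact mul_le_mul_of_nonneg_left hdδ2.le hK0
      have e4 : K * δ2 ≤ ε / 4 := by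
        have hne : K + 1 ≠ 0 := ne_of_gt (by linarith)
        have : δ2 * (K + 1) = ε / 4 := by
          rw [hδ2def, div_mul_eq_mul_div, mul_comm (4:ℝ) (K+1), ← div_div,
            mul_div_assoc, div_self hne, mul_one]
        nlinarith
      linarith
    calc |∑ j : Fin l, ((∫ t in Icc (0:ℝ) 1, φ (extIcc g t) j
            ∂(stieltjesOf fun t => extIcc g t j)) -
          ∫ t in Icc (0:ℝ) 1, φ (extIcc h t) j ∂(stieltjesOf fun t => extIcc h t j))|
        ≤ ∑ j : Fin l, |(∫ t in Icc (0:ℝ) 1, φ (extIcc g t) j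
            ∂(stieltjesOf fun t => extIcc g t j)) -
          ∫ t in Icc (0:ℝ) 1, φ (extIcc h t) j ∂(stieltjesOf fun t => extIcc h t j)| :=
          Finset.abs_sum_le_sum_abs _ _
      _ ≤ ∑ j : Fin l, (ε1 * (ξ' j - ξ j) +
          (2 * M * N * dgh + ε2 * ((ξ' j - ξ j) + (ξ' j - ξ j)))) :=
          Finset.sum_le_sum fun j _ => hperj j
      _ = ε1 * S + ((l : ℝ) * (2 * M * N * dgh) + 2 * ε2 * S) := hsumb
      _ < ε := hfinal
  refine ⟨hconts, ?_⟩
  obtain ⟨h₀, h₀mem, hmin⟩ := hΓcomp.exists_isMinOn hΓne hconts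
  exact ⟨h₀, h₀mem, fun g hg => hmin hg⟩
end

section
/- Let P₂(ℝ^k) denote the space of Borel probability measures on ℝ^k with finite second moment, equipped with the 2-Wasserstein distance. Let g : P₂(ℝ^k) × ℝ^k → ℝ be jointly continuous. Suppose that for every m ∈ P₂(ℝ^k), the set N_m := {x ∈ ℝ^k : g(m, x) > 0} is m-null, i.e. m(N_m) = 0. Then N_m = ∅ for every m ∈ P₂(ℝ^k); that is, g(m, x) ≤ 0 for all m ∈ P₂(ℝ^k) and all x ∈ ℝ^k. -/
open MeasureTheory Filter

/-- The squared 2-Wasserstein cost between two measures, as the infimum of the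
expected squared distance over couplings. -/
noncomputable def W2sq {E : Type*} [MeasurableSpace E] [NormedAddCommGroup E]
    (μ ν : Measure E) : ℝ :=
  sInf {r : ℝ | ∃ π : Measure (E × E), IsProbabilityMeasure π ∧
    π.map Prod.fst = μ ∧ π.map Prod.snd = ν ∧ r = ∫ p, ‖p.1 - p.2‖ ^ 2 ∂π}

/-- Finite second moment. -/
def FiniteSecondMoment {E : Type*} [MeasurableSpace E] [NormedAddCommGroup E]
    (μ : MeasureTheory.Measure E) : Prop :=
  MeasureTheory.Integrable (fun x => ‖x‖ ^ 2) μ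

/-- If `g : P₂(ℝ^k) × ℝ^k → ℝ` is jointly continuous (with respect to 2-Wasserstein
convergence in the measure variable) and for every `m ∈ P₂(ℝ^k)` the set
`N_m = {x : g(m,x) > 0}` is `m`-null, then `N_m = ∅` for every `m`, i.e. `g ≤ 0`
everywhere. -/
theorem stmt_14 {k : ℕ} (g : Measure (Fin k → ℝ) → (Fin k → ℝ) → ℝ)
    (hg_cont : ∀ m : Measure (Fin k → ℝ), IsProbabilityMeasure m → FiniteSecondMoment m →
      ∀ (mseq : ℕ → Measure (Fin k → ℝ)) (xseq : ℕ → Fin k → ℝ) (x : Fin k → ℝ),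
        (∀ n, IsProbabilityMeasure (mseq n) ∧ FiniteSecondMoment (mseq n)) →
        Tendsto (fun n => W2sq (mseq n) m) atTop (nhds 0) →
        Tendsto xseq atTop (nhds x) →
        Tendsto (fun n => g (mseq n) (xseq n)) atTop (nhds (g m x)))
    (hnull : ∀ m : Measure (Fin k → ℝ), IsProbabilityMeasure m → FiniteSecondMoment m →
      m {x | 0 < g m x} = 0) :
    ∀ m : Measure (Fin k → ℝ), IsProbabilityMeasure m → FiniteSecondMoment m →
      ∀ x, g m x ≤ 0 := by
  intro m hm hfsm x
  set a : ℕ → ENNReal := fun n => ((n : ENNReal) + 1)⁻¹ with ha_def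
  have ha1 : ∀ n, a n ≤ 1 := fun n => ENNReal.inv_le_one.mpr (le_add_self)
  have haT : ∀ n, a n ≠ ⊤ := fun n => by
    simp [ha_def, ENNReal.inv_ne_top]
  have ha0 : ∀ n, a n ≠ 0 := fun n => by
    simp [ha_def]
  have hbT : ∀ n, (1 - a n : ENNReal) ≠ ⊤ := fun n =>
    ne_top_of_le_ne_top ENNReal.one_ne_top tsub_le_self
  set mseq : ℕ → Measure (Fin k → ℝ) := fun n => a n • Measure.dirac x + (1 - a n) • m with hmseq
  have hprob : ∀ n, IsProbabilityMeasure (mseq n) := by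
    intro n
    constructor
    simp [hmseq, Measure.add_apply, Measure.smul_apply, measure_univ, smul_eq_mul,
      add_tsub_cancel_of_le (ha1 n)]
  have hnorm_meas : Measurable (fun y : (Fin k → ℝ) => ‖y‖ ^ 2) :=
    measurable_id.norm.pow_const 2
  have hint_dirac : Integrable (fun y : (Fin k → ℝ) => ‖y‖ ^ 2) (Measure.dirac x) := by
    refine ⟨hnorm_meas.aestronglyMeasurable, ?_⟩
    rw [hasFiniteIntegral_def, lintegral_dirac' x hnorm_meas.enorm]
    exact enorm_lt_top
  have hfsm_n : ∀ n, FiniteSecondMoment (mseq n) := fun n =>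
    (hint_dirac.smul_measure (haT n)).add_measure (hfsm.smul_measure (hbT n))
  -- g (mseq n) x ≤ 0
  have hle : ∀ n, g (mseq n) x ≤ 0 := by
    intro n
    by_contra h
    push_neg at h
    have hx : x ∈ {y | 0 < g (mseq n) y} := h
    have h0 := hnull (mseq n) (hprob n) (hfsm_n n)
    have hge : a n ≤ (mseq n) {y | 0 < g (mseq n) y} := by
      calc a n = a n * (Measure.dirac x) {y | 0 < g (mseq n) y} := by
            rw [Measure.dirac_apply_of_mem hx, mul_one]
        _ ≤ (mseq n) {y | 0 < g (mseq n) y} := by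
            simp only [hmseq, Measure.add_apply, Measure.smul_apply, smul_eq_mul]
            exact le_add_of_nonneg_right zero_le
    rw [h0] at hge
    exact ha0 n (le_zero_iff.mp hge)
  -- the coupling
  have hdiag : Measurable (fun y : (Fin k → ℝ) => (y, y)) := measurable_id.prodMk measurable_id
  set F : (Fin k → ℝ) × (Fin k → ℝ) → ℝ := fun p => ‖p.1 - p.2‖ ^ 2 with hF_def
  have hFc : Continuous F := ((continuous_fst.sub continuous_snd).norm).pow 2
  set C : ℝ := ∫ y, ‖x - y‖ ^ 2 ∂m with hC_def
  have hCint : Integrable (fun y : (Fin k → ℝ) => ‖x - y‖ ^ 2) m := by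
    have hb : Integrable (fun y : (Fin k → ℝ) => 2 * ‖x‖ ^ 2 + 2 * ‖y‖ ^ 2) m :=
      (integrable_const _).add (hfsm.const_mul 2)
    refine hb.mono' (((continuous_const.sub continuous_id).norm.pow 2).aestronglyMeasurable) ?_
    filter_upwards with y
    have h1 : ‖x - y‖ ≤ ‖x‖ + ‖y‖ := norm_sub_le x y
    have h2 : (0:ℝ) ≤ ‖x - y‖ := norm_nonneg _
    rw [Real.norm_eq_abs, abs_of_nonneg (by positivity)]
    nlinarith [sq_nonneg (‖x‖ - ‖y‖), norm_nonneg x, norm_nonneg y]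
  set πn : ℕ → Measure ((Fin k → ℝ) × (Fin k → ℝ)) := fun n =>
    a n • ((Measure.dirac x).prod m) + (1 - a n) • (m.map (fun y => (y, y))) with hπn
  have hmapdiag_prob : IsProbabilityMeasure (m.map (fun y : (Fin k → ℝ) => (y, y))) :=
    Measure.isProbabilityMeasure_map hdiag.aemeasurable
  have hπprob : ∀ n, IsProbabilityMeasure (πn n) := by
    intro n
    constructor
    simp [hπn, Measure.add_apply, Measure.smul_apply, measure_univ, smul_eq_mul,
      add_tsub_cancel_of_le (ha1 n)]
  have hcomp_fst : (Prod.fst ∘ fun y : (Fin k → ℝ) => (y, y)) = id := rfl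
  have hcomp_snd : (Prod.snd ∘ fun y : (Fin k → ℝ) => (y, y)) = id := rfl
  have hfst : ∀ n, (πn n).map Prod.fst = mseq n := by
    intro n
    rw [hπn, Measure.map_add _ _ measurable_fst, Measure.map_smul, Measure.map_smul,
      Measure.map_fst_prod, Measure.map_map measurable_fst hdiag, hcomp_fst, Measure.map_id]
    simp [hmseq, measure_univ]
  have hsnd : ∀ n, (πn n).map Prod.snd = m := by
    intro n
    rw [hπn, Measure.map_add _ _ measurable_snd, Measure.map_smul, Measure.map_smul,
      Measure.map_snd_prod, Measure.map_map measurable_snd hdiag, hcomp_snd, Measure.map_id]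
    simp only [measure_univ, one_smul]
    rw [← add_smul, add_tsub_cancel_of_le (ha1 n), one_smul]
  -- integral computation
  have hdprod : (Measure.dirac x).prod m = m.map (Prod.mk x) := Measure.dirac_prod x
  have hint1 : Integrable F ((Measure.dirac x).prod m) := by
    rw [hdprod]
    rw [integrable_map_measure (hFc.aestronglyMeasurable) measurable_prodMk_left.aemeasurable]
    exact hCint
  have hint2 : Integrable F (m.map (fun y : (Fin k → ℝ) => (y, y))) := by
    rw [integrable_map_measure (hFc.aestronglyMeasurable) hdiag.aemeasurable]
    have : (F ∘ fun y : (Fin k → ℝ) => (y, y)) = fun _ => (0 : ℝ) := by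
      funext y; simp [hF_def]
    rw [this]
    exact integrable_const 0
  have hintegral : ∀ n, (∫ p, F p ∂(πn n)) = (a n).toReal * C := by
    intro n
    rw [hπn]
    show (∫ p, F p ∂(a n • ((Measure.dirac x).prod m)
        + (1 - a n) • (m.map (fun y => (y, y))))) = (a n).toReal * C
    rw [integral_add_measure (hint1.smul_measure (haT n)) (hint2.smul_measure (hbT n)),
      integral_smul_measure, integral_smul_measure]
    have h1 : (∫ p, F p ∂((Measure.dirac x).prod m)) = C := by
      rw [hdprod, integral_map measurable_prodMk_left.aemeasurable hFc.aestronglyMeasurable]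
    have h2 : (∫ p, F p ∂(m.map (fun y : (Fin k → ℝ) => (y, y)))) = 0 := by
      rw [integral_map hdiag.aemeasurable hFc.aestronglyMeasurable]
      simp [hF_def]
    rw [h1, h2]
    simp [smul_eq_mul]
  -- W2sq bounds
  have hset_nonneg : ∀ n, ∀ r ∈ {r : ℝ | ∃ π : Measure ((Fin k → ℝ) × (Fin k → ℝ)), IsProbabilityMeasure π ∧
      π.map Prod.fst = mseq n ∧ π.map Prod.snd = m ∧ r = ∫ p, ‖p.1 - p.2‖ ^ 2 ∂π},
      0 ≤ r := by
    rintro n r ⟨π, _, _, _, rfl⟩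
    exact integral_nonneg fun p => by positivity
  have hW2_nonneg : ∀ n, 0 ≤ W2sq (mseq n) m := fun n => Real.sInf_nonneg (hset_nonneg n)
  have hW2_le : ∀ n, W2sq (mseq n) m ≤ (a n).toReal * C := by
    intro n
    have hmem : (a n).toReal * C ∈ {r : ℝ | ∃ π : Measure ((Fin k → ℝ) × (Fin k → ℝ)), IsProbabilityMeasure π ∧
        π.map Prod.fst = mseq n ∧ π.map Prod.snd = m ∧ r = ∫ p, ‖p.1 - p.2‖ ^ 2 ∂π} :=
      ⟨πn n, hπprob n, hfst n, hsnd n, (hintegral n).symm⟩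
    exact csInf_le ⟨0, hset_nonneg n⟩ hmem
  have haR : ∀ n, (a n).toReal = 1 / ((n : ℝ) + 1) := by
    intro n
    rw [ha_def]
    rw [ENNReal.toReal_inv]
    simp [ENNReal.toReal_add, one_div]
  have hlim : Tendsto (fun n => (a n).toReal * C) atTop (nhds 0) := by
    have := tendsto_one_div_add_atTop_nhds_zero_nat.mul_const C
    rw [zero_mul] at this
    simpa only [haR] using this
  have hW2 : Tendsto (fun n => W2sq (mseq n) m) atTop (nhds 0) :=
    tendsto_of_tendsto_of_tendsto_of_le_of_le tendsto_const_nhds hlim hW2_nonneg hW2_le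
  have htend := hg_cont m hm hfsm mseq (fun _ => x) x (fun n => ⟨hprob n, hfsm_n n⟩)
      hW2 tendsto_const_nhds
  exact le_of_tendsto htend (Eventually.of_forall hle)
end
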